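/- For each 0 ≤ i ≤ n, the subgroup G_i is a free factor of G_n, with a complement that is free of rank 3(n-i). -/

import Mathlib

open scoped commutatorElement

/-- Generators of `Gₙ`: quadruples `aᵢ, bᵢ, cᵢ, dᵢ` for `0 ≤ i ≤ n`
(encoded as `Fin (n+1) × Fin 4`) together with stable letters `tⱼ` for `0 ≤ j ≤ n-1`. -/
def GGen (n : ℕ) : Type := (Fin (n + 1) × Fin 4) ⊕ Fin n

/-- The relations of `Gₙ`: `cᵢ dᵢ [aᵢ, bᵢ] = 1` for `0 ≤ i ≤ n` and
`tⱼ⁻¹ dⱼ tⱼ = c_{j+1}` for `0 ≤ j ≤ n - 1`. -/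
def GRels (n : ℕ) : Set (FreeGroup (GGen n)) :=
  {r | (∃ i : Fin (n + 1),
          r = FreeGroup.of ((Sum.inl (i, 2)) : GGen n) * FreeGroup.of ((Sum.inl (i, 3)) : GGen n) *
              ⁅FreeGroup.of ((Sum.inl (i, 0)) : GGen n), FreeGroup.of ((Sum.inl (i, 1)) : GGen n)⁆) ∨
       (∃ j : Fin n,
          r = (FreeGroup.of ((Sum.inr j) : GGen n))⁻¹ * FreeGroup.of ((Sum.inl (j.castSucc, 3)) : GGen n) *
              FreeGroup.of ((Sum.inr j) : GGen n) * (FreeGroup.of ((Sum.inl (j.succ, 2)) : GGen n))⁻¹)}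

/-- The group `Gₙ`, obtained by gluing the surface groups
`Hᵢ = ⟨cᵢ, dᵢ, aᵢ, bᵢ ∣ cᵢ dᵢ [aᵢ, bᵢ] = 1⟩`, `0 ≤ i ≤ n`,
along boundary curves via `dⱼ^{tⱼ} = c_{j+1}`, `0 ≤ j ≤ n-1`. -/
abbrev GGrp (n : ℕ) : Type := PresentedGroup (GRels n)

/-- The generator `aᵢ` of `Gₙ`. -/
def Ga (n : ℕ) (i : Fin (n + 1)) : GGrp n := PresentedGroup.of ((Sum.inl (i, 0)) : GGen n)

/-- The generator `bᵢ` of `Gₙ`. -/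
def Gb (n : ℕ) (i : Fin (n + 1)) : GGrp n := PresentedGroup.of ((Sum.inl (i, 1)) : GGen n)

/-- The generator `cᵢ` of `Gₙ`. -/
def Gc (n : ℕ) (i : Fin (n + 1)) : GGrp n := PresentedGroup.of ((Sum.inl (i, 2)) : GGen n)

/-- The generator `dᵢ` of `Gₙ`. -/
def Gd (n : ℕ) (i : Fin (n + 1)) : GGrp n := PresentedGroup.of ((Sum.inl (i, 3)) : GGen n)

/-- The stable letter `tⱼ` of `Gₙ`. -/
def Gt (n : ℕ) (j : Fin n) : GGrp n := PresentedGroup.of ((Sum.inr j) : GGen n)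

/-- The canonical copy of the surface group `Hᵢ` inside `Gₙ`,
generated by `aᵢ, bᵢ, cᵢ, dᵢ`. -/
def Hsub (n : ℕ) (i : Fin (n + 1)) : Subgroup (GGrp n) :=
  Subgroup.closure {Ga n i, Gb n i, Gc n i, Gd n i}

/-- `G` is the internal free product of its subgroups `A` and `B`. -/
def IsFreeProd {G : Type*} [Group G] (A B : Subgroup G) : Prop :=
  Function.Bijective (Monoid.Coprod.lift A.subtype B.subtype)

/-- `A` is a free factor of `G`. -/
def IsFreeFactor {G : Type*} [Group G] (A : Subgroup G) : Prop :=
  ∃ B : Subgroup G, IsFreeProd A B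

/-- `G` is the internal free product of its subgroups `A`, `B` and `C`. -/
def IsFreeProd3 {G : Type*} [Group G] (A B C : Subgroup G) : Prop :=
  Function.Bijective (Monoid.CoprodI.lift (fun i : Fin 3 => (![A, B, C] i).subtype))
/-- The canonical copy of `Gᵢ` inside `Gₙ`, generated by `aₖ, bₖ, cₖ, dₖ` for `k ≤ i`
and `tⱼ` for `j < i`. -/
def Gsub (n : ℕ) (i : Fin (n + 1)) : Subgroup (GGrp n) :=
  Subgroup.closure
    ({x | ∃ k : Fin (n + 1), k ≤ i ∧ (x = Ga n k ∨ x = Gb n k ∨ x = Gc n k ∨ x = Gd n k)} ∪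
     {x | ∃ j : Fin n, (j : ℕ) < (i : ℕ) ∧ x = Gt n j})


namespace GsubProof

open Monoid Subgroup
open Fin.NatCast

/-! ### Generic lemmas about free products inside free groups -/

theorem freeGroup_isFreeProd {γ : Type*} (p : γ → Prop) [DecidablePred p] :
    IsFreeProd (closure (FreeGroup.of '' {x | p x}))
      (closure (FreeGroup.of '' {x | ¬ p x})) := by
  set A := closure (FreeGroup.of '' {x | p x}) with hA
  set B := closure (FreeGroup.of '' {x | ¬ p x}) with hB
  set Φ := Coprod.lift A.subtype B.subtype with hΦ
  set Ψ : FreeGroup γ →* Coprod ↥A ↥B := FreeGroup.lift (fun x =>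
    if h : p x then Coprod.inl ⟨FreeGroup.of x, subset_closure ⟨x, h, rfl⟩⟩
    else Coprod.inr ⟨FreeGroup.of x, subset_closure ⟨x, h, rfl⟩⟩) with hΨ
  have hΦΨ : ∀ g, Φ (Ψ g) = g := by
    intro g
    have : Φ.comp Ψ = MonoidHom.id _ := by
      apply FreeGroup.ext_hom
      intro a
      by_cases h : p a <;> simp [hΨ, hΦ, h]
    exact DFunLike.congr_fun this g
  have memA : ∀ g (hg : g ∈ A), Ψ g = Coprod.inl ⟨g, hg⟩ := by
    intro g hg
    induction hg using closure_induction with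
    | mem x hx =>
      obtain ⟨y, hy, rfl⟩ := hx
      simpa [hΨ] using dif_pos hy
    | one => exact (map_one (Coprod.inl : ↥A →* Coprod ↥A ↥B)).symm
    | mul x y hx hy ihx ihy => rw [map_mul, ihx, ihy, ← map_mul]; rfl
    | inv x hx ih => rw [map_inv, ih, ← map_inv]; rfl
  have memB : ∀ g (hg : g ∈ B), Ψ g = Coprod.inr ⟨g, hg⟩ := by
    intro g hg
    induction hg using closure_induction with
    | mem x hx =>
      obtain ⟨y, hy, rfl⟩ := hx
      simpa [hΨ] using dif_neg hy
    | one => exact (map_one (Coprod.inr : ↥B →* Coprod ↥A ↥B)).symm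
    | mul x y hx hy ihx ihy => rw [map_mul, ihx, ihy, ← map_mul]; rfl
    | inv x hx ih => rw [map_inv, ih, ← map_inv]; rfl
  have hΨΦ : Ψ.comp Φ = MonoidHom.id _ := by
    apply Coprod.hom_ext
    · ext a
      simpa [hΦ] using memA a.1 a.2
    · ext b
      simpa [hΦ] using memB b.1 b.2
  exact ⟨Function.LeftInverse.injective (g := Ψ) (fun x => DFunLike.congr_fun hΨΦ x),
    Function.RightInverse.surjective (g := Ψ) hΦΨ⟩

noncomputable def closureFreeEquiv {γ : Type*} (s : Set γ) [DecidablePred (· ∈ s)] :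
    ↥(closure (FreeGroup.of '' s)) ≃* FreeGroup s := by
  set m : FreeGroup s →* FreeGroup γ := FreeGroup.lift (fun x => FreeGroup.of x.1) with hm
  have hinj : Function.Injective m := by
    set r : FreeGroup γ →* FreeGroup s :=
      FreeGroup.lift (fun x => if h : x ∈ s then FreeGroup.of (⟨x, h⟩ : s) else 1) with hr
    have : r.comp m = MonoidHom.id _ := by
      apply FreeGroup.ext_hom
      intro a
      simp [hm, hr, a.2]
    exact Function.LeftInverse.injective (g := r) (fun x => DFunLike.congr_fun this x)
  have hrange : m.range = closure (FreeGroup.of '' s) := by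
    rw [MonoidHom.range_eq_map, ← FreeGroup.closure_range_of, MonoidHom.map_closure]
    congr 1
    ext y
    constructor
    · rintro ⟨_, ⟨x, rfl⟩, rfl⟩
      exact ⟨x.1, x.2, by simp [hm]⟩
    · rintro ⟨x, hx, rfl⟩
      exact ⟨FreeGroup.of (⟨x, hx⟩ : s), ⟨_, rfl⟩, by simp [hm]⟩
  exact ((MonoidHom.ofInjective hinj).trans (MulEquiv.subgroupCongr hrange)).symm

theorem IsFreeProd.map_mulEquiv {G H : Type*} [Group G] [Group H] (e : G ≃* H) {A B : Subgroup G}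
    (h : IsFreeProd A B) : IsFreeProd (A.map e.toMonoidHom) (B.map e.toMonoidHom) := by
  set A' := A.map e.toMonoidHom
  set B' := B.map e.toMonoidHom
  set c : Coprod ↥A ↥B ≃* Coprod ↥A' ↥B' :=
    MulEquiv.coprodCongr (e.subgroupMap A) (e.subgroupMap B) with hc
  have key : (Coprod.lift A'.subtype B'.subtype).comp c.toMonoidHom =
      e.toMonoidHom.comp (Coprod.lift A.subtype B.subtype) := by
    apply Coprod.hom_ext <;> rfl
  have hfun : ∀ y, Coprod.lift A'.subtype B'.subtype y =
      e (Coprod.lift A.subtype B.subtype (c.symm y)) := by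
    intro y
    have := DFunLike.congr_fun key (c.symm y)
    simpa using this
  have : Function.Bijective (fun y => e (Coprod.lift A.subtype B.subtype (c.symm y))) :=
    (e.bijective.comp h).comp c.symm.bijective
  unfold IsFreeProd
  rw [show (⇑(Coprod.lift A'.subtype B'.subtype)) = _ from funext hfun]
  exact this

theorem map_symm_map {G H : Type*} [Group G] [Group H] (e : G ≃* H) (K : Subgroup G) :
    (K.map e.toMonoidHom).map e.symm.toMonoidHom = K := by
  rw [Subgroup.map_map]
  have : (e.symm.toMonoidHom.comp e.toMonoidHom) = MonoidHom.id G := by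
    ext x; simp
  rw [this, Subgroup.map_id]

/-! ### The free generating set of `Gₙ` -/

abbrev Lab (n : ℕ) : Type := (Fin (n + 1) × Fin 2) ⊕ (Unit ⊕ Fin n)

def lvl {n : ℕ} : Lab n → ℕ
  | .inl (k, _) => k.val
  | .inr (.inl _) => 0
  | .inr (.inr j) => j.val + 1

def wA (n : ℕ) (k : Fin (n + 1)) : FreeGroup (Lab n) := FreeGroup.of (.inl (k, 0))
def wB (n : ℕ) (k : Fin (n + 1)) : FreeGroup (Lab n) := FreeGroup.of (.inl (k, 1))
def wT (n : ℕ) (j : Fin n) : FreeGroup (Lab n) := FreeGroup.of (.inr (.inr j))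

def wC (n : ℕ) : ℕ → FreeGroup (Lab n)
  | 0 => FreeGroup.of (.inr (.inl ()))
  | (k+1) =>
    if h : k < n then
      (wT n ⟨k, h⟩)⁻¹ * ((wC n k)⁻¹ * ⁅wA n (k : Fin (n+1)), wB n (k : Fin (n+1))⁆⁻¹) * wT n ⟨k, h⟩
    else 1

def wD (n : ℕ) (k : ℕ) : FreeGroup (Lab n) :=
  (wC n k)⁻¹ * ⁅wA n (k : Fin (n+1)), wB n (k : Fin (n+1))⁆⁻¹

lemma wC_succ (n : ℕ) (k : ℕ) (h : k < n) :
    wC n (k+1) = (wT n ⟨k, h⟩)⁻¹ * wD n k * wT n ⟨k, h⟩ := by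
  rw [wC, dif_pos h]; rfl

def fgen (n : ℕ) : GGen n → FreeGroup (Lab n)
  | .inl (k, m) => ![wA n k, wB n k, wC n k.val, wD n k.val] m
  | .inr j => wT n j

lemma fgen_a (n : ℕ) (k : Fin (n+1)) : fgen n (.inl (k, 0)) = wA n k := rfl
lemma fgen_b (n : ℕ) (k : Fin (n+1)) : fgen n (.inl (k, 1)) = wB n k := rfl
lemma fgen_c (n : ℕ) (k : Fin (n+1)) : fgen n (.inl (k, 2)) = wC n k.val := rfl
lemma fgen_d (n : ℕ) (k : Fin (n+1)) : fgen n (.inl (k, 3)) = wD n k.val := rfl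
lemma fgen_t (n : ℕ) (j : Fin n) : fgen n (.inr j) = wT n j := rfl

lemma lift_rels (n : ℕ) : ∀ r ∈ GRels n, FreeGroup.lift (fgen n) r = 1 := by
  rintro r (⟨i, rfl⟩ | ⟨j, rfl⟩)
  · show FreeGroup.lift (fgen n) (FreeGroup.of (α := GGen n) (Sum.inl (i, 2)) *
      FreeGroup.of (α := GGen n) (Sum.inl (i, 3)) *
      ⁅FreeGroup.of (α := GGen n) (Sum.inl (i, 0)), FreeGroup.of (α := GGen n) (Sum.inl (i, 1))⁆) = 1
    simp only [map_mul, map_commutatorElement, FreeGroup.lift_apply_of, fgen_a, fgen_b, fgen_c, fgen_d]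
    erw [FreeGroup.lift_apply_of, FreeGroup.lift_apply_of, FreeGroup.lift_apply_of, FreeGroup.lift_apply_of]
    rw [fgen_a, fgen_b, fgen_c, fgen_d]
    rw [wD, Fin.cast_val_eq_self]
    group
  · show FreeGroup.lift (fgen n) ((FreeGroup.of (α := GGen n) (Sum.inr j))⁻¹ *
      FreeGroup.of (α := GGen n) (Sum.inl (j.castSucc, 3)) * FreeGroup.of (α := GGen n) (Sum.inr j) *
      (FreeGroup.of (α := GGen n) (Sum.inl (j.succ, 2)))⁻¹) = 1
    simp only [map_mul, map_inv, FreeGroup.lift_apply_of, fgen_c, fgen_d, fgen_t]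
    erw [FreeGroup.lift_apply_of, FreeGroup.lift_apply_of, FreeGroup.lift_apply_of]
    erw [fgen_c, fgen_d, fgen_t]
    rw [show (j.castSucc).val = j.val from rfl, show (j.succ).val = j.val + 1 from rfl,
      wC_succ n j.val j.isLt, Fin.eta]
    group

/-! ### The isomorphism `Gₙ ≃* FreeGroup (Lab n)` -/

def fwd (n : ℕ) : GGrp n →* FreeGroup (Lab n) := PresentedGroup.toGroup (lift_rels n)

lemma fwd_Ga (n : ℕ) (k : Fin (n+1)) : fwd n (Ga n k) = wA n k := PresentedGroup.toGroup.of _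
lemma fwd_Gb (n : ℕ) (k : Fin (n+1)) : fwd n (Gb n k) = wB n k := PresentedGroup.toGroup.of _
lemma fwd_Gc (n : ℕ) (k : Fin (n+1)) : fwd n (Gc n k) = wC n k.val := PresentedGroup.toGroup.of _
lemma fwd_Gd (n : ℕ) (k : Fin (n+1)) : fwd n (Gd n k) = wD n k.val := PresentedGroup.toGroup.of _
lemma fwd_Gt (n : ℕ) (j : Fin n) : fwd n (Gt n j) = wT n j := PresentedGroup.toGroup.of _

def ggen (n : ℕ) : Lab n → GGrp n
  | .inl (k, m) => ![Ga n k, Gb n k] m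
  | .inr (.inl _) => Gc n 0
  | .inr (.inr j) => Gt n j

def bwd (n : ℕ) : FreeGroup (Lab n) →* GGrp n := FreeGroup.lift (ggen n)

lemma bwd_wA (n : ℕ) (k : Fin (n+1)) : bwd n (wA n k) = Ga n k := by
  rw [wA, bwd, FreeGroup.lift_apply_of]; rfl
lemma bwd_wB (n : ℕ) (k : Fin (n+1)) : bwd n (wB n k) = Gb n k := by
  rw [wB, bwd, FreeGroup.lift_apply_of]; rfl
lemma bwd_wT (n : ℕ) (j : Fin n) : bwd n (wT n j) = Gt n j := by
  rw [wT, bwd, FreeGroup.lift_apply_of]; rfl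

lemma grel_mem (n : ℕ) (r : FreeGroup (GGen n)) (hr : r ∈ GRels n) :
    PresentedGroup.mk (GRels n) r = 1 :=
  PresentedGroup.one_of_mem hr

lemma grel1 (n : ℕ) (k : Fin (n+1)) : Gc n k * Gd n k * ⁅Ga n k, Gb n k⁆ = 1 := by
  have := grel_mem n _ (Or.inl ⟨k, rfl⟩)
  exact this

lemma grel2 (n : ℕ) (j : Fin n) :
    (Gt n j)⁻¹ * Gd n j.castSucc * Gt n j * (Gc n j.succ)⁻¹ = 1 := by
  have := grel_mem n _ (Or.inr ⟨j, rfl⟩)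
  exact this

lemma Gd_eq (n : ℕ) (k : Fin (n+1)) :
    Gd n k = (Gc n k)⁻¹ * ⁅Ga n k, Gb n k⁆⁻¹ := by
  have h := grel1 n k
  calc Gd n k = (Gc n k)⁻¹ * (Gc n k * Gd n k * ⁅Ga n k, Gb n k⁆) * ⁅Ga n k, Gb n k⁆⁻¹ := by
        group
    _ = (Gc n k)⁻¹ * ⁅Ga n k, Gb n k⁆⁻¹ := by rw [h]; group

lemma bwd_wC (n : ℕ) : ∀ k : ℕ, k ≤ n → bwd n (wC n k) = Gc n (k : Fin (n+1)) := by
  intro k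
  induction k with
  | zero =>
    intro _
    rw [wC, bwd, FreeGroup.lift_apply_of]
    rfl
  | succ k ih =>
    intro hk
    have h : k < n := hk
    have hcast : ((k : ℕ) : Fin (n+1)).val = k := Fin.val_cast_of_lt (by omega)
    rw [wC_succ n k h, map_mul, map_mul, map_inv, bwd_wT, wD, map_mul, map_inv, map_inv,
      map_commutatorElement, bwd_wA, bwd_wB, ih (by omega)]
    have h2 := grel2 n ⟨k, h⟩
    have hcs : (⟨k, h⟩ : Fin n).castSucc = (k : Fin (n+1)) := by
      apply Fin.ext; simp [hcast]
    have hsu : (⟨k, h⟩ : Fin n).succ = ((k+1 : ℕ) : Fin (n+1)) := by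
      apply Fin.ext
      rw [Fin.val_succ, Fin.val_cast_of_lt (show k + 1 < n + 1 by omega)]
    rw [hcs, hsu] at h2
    have : (Gt n ⟨k, h⟩)⁻¹ * Gd n (k : Fin (n+1)) * Gt n ⟨k, h⟩ = Gc n ((k+1 : ℕ) : Fin (n+1)) := by
      have := mul_eq_one_iff_eq_inv.mp h2
      rw [this]
      group
    rw [← this, Gd_eq]

lemma bwd_wD (n : ℕ) (k : ℕ) (hk : k ≤ n) : bwd n (wD n k) = Gd n (k : Fin (n+1)) := by
  rw [wD, map_mul, map_inv, map_inv, map_commutatorElement, bwd_wA, bwd_wB, bwd_wC n k hk,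
    Gd_eq]

lemma bwd_fwd (n : ℕ) : (bwd n).comp (fwd n) = MonoidHom.id (GGrp n) := by
  apply PresentedGroup.ext
  rintro (⟨k, m⟩ | j)
  · obtain ⟨mv, hm⟩ := m
    interval_cases mv
    · show bwd n (fwd n (Ga n k)) = Ga n k
      rw [fwd_Ga, bwd_wA]
    · show bwd n (fwd n (Gb n k)) = Gb n k
      rw [fwd_Gb, bwd_wB]
    · show bwd n (fwd n (Gc n k)) = Gc n k
      rw [fwd_Gc, bwd_wC n k.val (by omega), Fin.cast_val_eq_self]
    · show bwd n (fwd n (Gd n k)) = Gd n k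
      rw [fwd_Gd, bwd_wD n k.val (by omega), Fin.cast_val_eq_self]
  · show bwd n (fwd n (Gt n j)) = Gt n j
    rw [fwd_Gt, bwd_wT]

lemma fwd_bwd (n : ℕ) : (fwd n).comp (bwd n) = MonoidHom.id (FreeGroup (Lab n)) := by
  apply FreeGroup.ext_hom
  rintro (⟨k, m⟩ | (u | j))
  · obtain ⟨mv, hm⟩ := m
    interval_cases mv
    · show fwd n (bwd n (wA n k)) = wA n k
      rw [bwd_wA, fwd_Ga]
    · show fwd n (bwd n (wB n k)) = wB n k
      rw [bwd_wB, fwd_Gb]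
  · show fwd n (bwd n (FreeGroup.of (.inr (.inl ())))) = FreeGroup.of (.inr (.inl ()))
    rw [show (FreeGroup.of (.inr (.inl ())) : FreeGroup (Lab n)) = wC n 0 from rfl,
      bwd_wC n 0 (by omega), show ((0 : ℕ) : Fin (n+1)) = 0 from rfl, fwd_Gc]
    rfl
  · show fwd n (bwd n (wT n j)) = wT n j
    rw [bwd_wT, fwd_Gt]

noncomputable def phi (n : ℕ) : GGrp n ≃* FreeGroup (Lab n) :=
  MonoidHom.toMulEquiv (fwd n) (bwd n) (bwd_fwd n) (fwd_bwd n)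

lemma phi_apply (n : ℕ) (g : GGrp n) : phi n g = fwd n g := rfl
lemma phi_toMonoidHom (n : ℕ) : (phi n).toMonoidHom = fwd n := rfl

end GsubProof

namespace GsubProof

open Monoid Subgroup
open Fin.NatCast

lemma mem_low_wA (n N : ℕ) (k : Fin (n+1)) (hk : k.val ≤ N) :
    wA n k ∈ closure (FreeGroup.of '' {x : Lab n | lvl x ≤ N}) :=
  Subgroup.subset_closure ⟨.inl (k, 0), by simp only [Set.mem_setOf_eq, lvl]; omega, rfl⟩

lemma mem_low_wB (n N : ℕ) (k : Fin (n+1)) (hk : k.val ≤ N) :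
    wB n k ∈ closure (FreeGroup.of '' {x : Lab n | lvl x ≤ N}) :=
  Subgroup.subset_closure ⟨.inl (k, 1), by simp only [Set.mem_setOf_eq, lvl]; omega, rfl⟩

lemma mem_low_wT (n N : ℕ) (j : Fin n) (hj : j.val + 1 ≤ N) :
    wT n j ∈ closure (FreeGroup.of '' {x : Lab n | lvl x ≤ N}) :=
  Subgroup.subset_closure ⟨.inr (.inr j), by simp only [Set.mem_setOf_eq, lvl]; omega, rfl⟩

lemma commutator_mem {G : Type*} [Group G] {H : Subgroup G} {x y : G}
    (hx : x ∈ H) (hy : y ∈ H) : ⁅x, y⁆ ∈ H := by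
  rw [commutatorElement_def]
  exact mul_mem (mul_mem (mul_mem hx hy) (inv_mem hx)) (inv_mem hy)

lemma wD_mem_low (n N k : ℕ) (hkN : k ≤ N) (hN : N ≤ n)
    (hc : wC n k ∈ closure (FreeGroup.of '' {x : Lab n | lvl x ≤ N})) :
    wD n k ∈ closure (FreeGroup.of '' {x : Lab n | lvl x ≤ N}) := by
  have hvk : ((k : Fin (n+1))).val = k := Fin.val_cast_of_lt (by omega)
  have ha := mem_low_wA n N (k : Fin (n+1)) (by omega)
  have hb := mem_low_wB n N (k : Fin (n+1)) (by omega)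
  rw [wD]
  exact mul_mem (inv_mem hc) (inv_mem (commutator_mem ha hb))

lemma wC_mem_low (n N : ℕ) (hN : N ≤ n) :
    ∀ k : ℕ, k ≤ N → wC n k ∈ closure (FreeGroup.of '' {x : Lab n | lvl x ≤ N}) := by
  intro k
  induction k with
  | zero =>
    intro _
    rw [wC]
    exact Subgroup.subset_closure ⟨.inr (.inl ()), by simp only [Set.mem_setOf_eq, lvl]; omega, rfl⟩
  | succ k ih =>
    intro hk
    have hkn : k < n := by omega
    have ht := mem_low_wT n N ⟨k, hkn⟩ (by simpa using hk)
    have hd := wD_mem_low n N k (by omega) hN (ih (by omega))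
    rw [wC_succ n k hkn]
    exact mul_mem (mul_mem (inv_mem ht) hd) ht

lemma fwd_Gsub (n : ℕ) (i : Fin (n+1)) :
    (Gsub n i).map (fwd n) =
      closure (FreeGroup.of '' {x : Lab n | lvl x ≤ (i : ℕ)}) := by
  have hin : (i : ℕ) ≤ n := by omega
  rw [Gsub, MonoidHom.map_closure]
  apply le_antisymm
  · rw [closure_le]
    rintro _ ⟨x, hx, rfl⟩
    rcases hx with ⟨k, hk, (rfl | rfl | rfl | rfl)⟩ | ⟨j, hj, rfl⟩
    · rw [fwd_Ga]; exact mem_low_wA n i k (Fin.le_def.mp hk)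
    · rw [fwd_Gb]; exact mem_low_wB n i k (Fin.le_def.mp hk)
    · rw [fwd_Gc]; exact wC_mem_low n i hin k.val (Fin.le_def.mp hk)
    · rw [fwd_Gd]
      exact wD_mem_low n i k.val (Fin.le_def.mp hk) hin (wC_mem_low n i hin k.val (Fin.le_def.mp hk))
    · rw [fwd_Gt]; exact mem_low_wT n i j (by omega)
  · rw [closure_le]
    rintro _ ⟨x, hx, rfl⟩
    simp only [Set.mem_setOf_eq] at hx
    apply Subgroup.subset_closure
    rcases x with ⟨k, m⟩ | (u | j)
    · simp only [lvl] at hx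
      obtain ⟨mv, hm⟩ := m
      interval_cases mv
      · exact ⟨Ga n k, Or.inl ⟨k, Fin.le_def.mpr hx, Or.inl rfl⟩, fwd_Ga n k⟩
      · exact ⟨Gb n k, Or.inl ⟨k, Fin.le_def.mpr hx, Or.inr (Or.inl rfl)⟩, fwd_Gb n k⟩
    · cases u
      refine ⟨Gc n 0, Or.inl ⟨0, Fin.zero_le i, Or.inr (Or.inr (Or.inl rfl))⟩, ?_⟩
      rw [fwd_Gc]
      rfl
    · simp only [lvl] at hx
      exact ⟨Gt n j, Or.inr ⟨j, by omega, rfl⟩, fwd_Gt n j⟩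

/-! ### Counting the complementary generators -/

def subEquiv1 (n m : ℕ) : {k : Fin (n+1) // ¬ k.val ≤ m} ≃ Fin (n - m) where
  toFun k := ⟨k.1.val - m - 1, by have h1 := k.1.isLt; have h2 := k.2; omega⟩
  invFun r := ⟨⟨m + 1 + r.val, by have := r.isLt; omega⟩, by show ¬ m + 1 + r.val ≤ m; omega⟩
  left_inv k := by
    apply Subtype.ext; apply Fin.ext
    have h1 := k.1.isLt; have h2 := k.2
    show m + 1 + (k.1.val - m - 1) = k.1.val
    omega
  right_inv r := by
    apply Fin.ext
    have := r.isLt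
    show m + 1 + r.val - m - 1 = r.val
    omega

def subEquiv2 (n m : ℕ) : {j : Fin n // ¬ j.val + 1 ≤ m} ≃ Fin (n - m) where
  toFun j := ⟨j.1.val - m, by have h1 := j.1.isLt; have h2 := j.2; omega⟩
  invFun r := ⟨⟨m + r.val, by have := r.isLt; omega⟩, by show ¬ m + r.val + 1 ≤ m; omega⟩
  left_inv j := by
    apply Subtype.ext; apply Fin.ext
    have h1 := j.1.isLt; have h2 := j.2
    show m + (j.1.val - m) = j.1.val
    omega
  right_inv r := by
    apply Fin.ext
    have := r.isLt
    show m + r.val - m = r.val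
    omega

lemma highCard (n m : ℕ) :
    Fintype.card {x : Lab n // ¬ lvl x ≤ m} = 3 * (n - m) := by
  haveI : IsEmpty {u : Unit // ¬ lvl (Sum.inr (Sum.inl u) : Lab n) ≤ m} :=
    ⟨fun u => u.2 (by simp [lvl])⟩
  have E1 : {y : Fin (n+1) × Fin 2 // ¬ lvl (Sum.inl y : Lab n) ≤ m} ≃ Fin (n - m) × Fin 2 :=
    (Equiv.subtypeEquivRight (fun y => by rcases y with ⟨k, q⟩; simp [lvl])).trans
      ((Equiv.prodSubtypeFstEquivSubtypeProd (p := fun k : Fin (n+1) => ¬ k.val ≤ m)).trans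
        (Equiv.prodCongr (subEquiv1 n m) (Equiv.refl _)))
  have Eu : {u : Unit // ¬ lvl (Sum.inr (Sum.inl u) : Lab n) ≤ m} ≃ Fin 0 :=
    Equiv.equivOfIsEmpty _ _
  have Ej : {j : Fin n // ¬ lvl (Sum.inr (Sum.inr j) : Lab n) ≤ m} ≃ Fin (n - m) :=
    (Equiv.subtypeEquivRight (fun j => by simp [lvl])).trans (subEquiv2 n m)
  have E : {x : Lab n // ¬ lvl x ≤ m} ≃ (Fin (n - m) × Fin 2) ⊕ (Fin 0 ⊕ Fin (n - m)) :=
    (Equiv.subtypeSum).trans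
      (Equiv.sumCongr E1 ((Equiv.subtypeSum).trans (Equiv.sumCongr Eu Ej)))
  rw [Fintype.card_congr E]
  simp only [Fintype.card_sum, Fintype.card_prod, Fintype.card_fin]
  omega

end GsubProof

/-- For each `0 ≤ i ≤ n`, `Gᵢ` is a free factor of `Gₙ` with a complement
free of rank `3(n - i)`. -/
theorem Gsub_isFreeFactor_with_free_complement (n : ℕ) (i : Fin (n + 1)) :
    ∃ B : Subgroup (GGrp n), IsFreeProd (Gsub n i) B ∧
      Nonempty (B ≃* FreeGroup (Fin (3 * (n - (i : ℕ))))) := by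
  classical
  open GsubProof Subgroup in
  refine ⟨(closure (FreeGroup.of '' {x : Lab n | ¬ lvl x ≤ (i : ℕ)})).map
    (phi n).symm.toMonoidHom, ?_, ?_⟩
  · have h1 := freeGroup_isFreeProd (fun x : Lab n => lvl x ≤ (i : ℕ))
    have h2 := IsFreeProd.map_mulEquiv (phi n).symm h1
    have h3 : (closure (FreeGroup.of '' {x : Lab n | lvl x ≤ (i : ℕ)})).map
        (phi n).symm.toMonoidHom = Gsub n i := by
      have h4 : (Gsub n i).map (phi n).toMonoidHom =
          closure (FreeGroup.of '' {x : Lab n | lvl x ≤ (i : ℕ)}) := by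
        rw [phi_toMonoidHom]; exact fwd_Gsub n i
      rw [← h4, map_symm_map]
    rwa [h3] at h2
  · have e1 := ((phi n).symm.subgroupMap
      (closure (FreeGroup.of '' {x : Lab n | ¬ lvl x ≤ (i : ℕ)}))).symm
    have e2 := closureFreeEquiv (γ := Lab n) {x : Lab n | ¬ lvl x ≤ (i : ℕ)}
    have e3 : {x : Lab n | ¬ lvl x ≤ (i : ℕ)} ≃ Fin (3 * (n - (i : ℕ))) :=
      Fintype.equivFinOfCardEq (highCard n (i : ℕ))
    exact ⟨(e1.trans e2).trans (FreeGroup.freeGroupCongr e3)⟩
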